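/- Let Σ be a symmetric positive definite n×n real matrix, μ ∈ ℝⁿ with all entries positive, γ ∈ ℝⁿ with all entries positive, γ_R ≥ 0, and k := (μᵀΣ⁻¹μ)⁻¹. Define M̄ := (γ_R + 1/(∑_j γ_j⁻¹)) Σ + k · D(μ²) D(γ) − (k/(∑_j γ_j⁻¹)) μμᵀ, where D(x) denotes the diagonal matrix with diagonal x and μ² is the entrywise square of μ. Then M̄ is positive definite (in particular invertible). -/

import Mathlib

open Matrix BigOperators

theorem stmt1 {n : ℕ} (S : Matrix (Fin n) (Fin n) ℝ) (hS : S.PosDef)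
    (μ γ : Fin n → ℝ) (hμ : ∀ i, 0 < μ i) (hγ : ∀ i, 0 < γ i)
    (γR k : ℝ) (hγR : 0 ≤ γR) (hk : k = (μ ⬝ᵥ S⁻¹.mulVec μ)⁻¹) :
    ((γR + (∑ j, (γ j)⁻¹)⁻¹) • S
      + k • (Matrix.diagonal (fun i => (μ i) ^ 2) * Matrix.diagonal γ)
      - (k / (∑ j, (γ j)⁻¹)) • Matrix.vecMulVec μ μ).PosDef := by
  -- symmetry of S
  have hsym : ∀ i j, S i j = S j i := by
    intro i j
    conv_lhs => rw [← hS.1]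
    rfl
  have hdsym : ∀ v w : Fin n → ℝ, v ⬝ᵥ S *ᵥ w = w ⬝ᵥ S *ᵥ v := by
    intro v w
    simp only [dotProduct, mulVec, Finset.mul_sum]
    rw [Finset.sum_comm]
    refine Finset.sum_congr rfl fun i _ => Finset.sum_congr rfl fun j _ => ?_
    rw [hsym j i]; ring
  have hsmul : ∀ (r : ℝ) (A : Matrix (Fin n) (Fin n) ℝ), A.IsHermitian → (r • A).IsHermitian :=
    fun r A hA => by
      have : (r • A)ᴴ = r • A := by rw [Matrix.conjTranspose_smul, star_trivial, hA.eq]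
      exact this
  refine Matrix.PosDef.of_dotProduct_mulVec_pos ?_ ?_
  · -- Hermitian
    have h1 : ((γR + (∑ j, (γ j)⁻¹)⁻¹) • S).IsHermitian := hsmul _ _ hS.1
    have h2 : (k • (Matrix.diagonal (fun i => (μ i) ^ 2) * Matrix.diagonal γ)).IsHermitian := by
      refine hsmul _ _ ?_
      rw [Matrix.diagonal_mul_diagonal]
      exact Matrix.isHermitian_diagonal _
    have h3 : (Matrix.vecMulVec μ μ).IsHermitian := by
      refine Matrix.IsHermitian.ext fun i j => ?_
      simp [Matrix.vecMulVec_apply, mul_comm]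
    exact (h1.add h2).sub (hsmul _ _ h3)
  · intro v hv
    have hn : 0 < n := by
      rcases Nat.eq_zero_or_pos n with h | h
      · exfalso; apply hv; ext i; exact absurd i.2 (by omega)
      · exact h
    have hμ0 : μ ≠ 0 := by
      intro h
      have := hμ ⟨0, hn⟩
      rw [h] at this; simp at this
    -- k > 0
    have hki : 0 < μ ⬝ᵥ S⁻¹ *ᵥ μ := by
      have := hS.inv.dotProduct_mulVec_pos hμ0; rw [star_trivial] at this; exact this
    have hkpos : 0 < k := hk ▸ inv_pos.mpr hki
    -- c > 0
    set c := ∑ j, (γ j)⁻¹ with hc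
    have hcpos : 0 < c := Finset.sum_pos (fun i _ => inv_pos.mpr (hγ i)) ⟨⟨0, hn⟩, Finset.mem_univ _⟩
    -- Cauchy–Schwarz : k * (μ ⬝ᵥ v)^2 ≤ v ⬝ᵥ S *ᵥ v
    have hdet : IsUnit S.det := isUnit_iff_ne_zero.mpr hS.det_pos.ne'
    have hSinv : S *ᵥ (S⁻¹ *ᵥ μ) = μ := by
      rw [Matrix.mulVec_mulVec, Matrix.mul_nonsing_inv S hdet, Matrix.one_mulVec]
    have hCS : k * (μ ⬝ᵥ v) ^ 2 ≤ v ⬝ᵥ S *ᵥ v := by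
      have h0 : (0:ℝ) ≤ (v - (k * (μ ⬝ᵥ v)) • (S⁻¹ *ᵥ μ)) ⬝ᵥ
          S *ᵥ (v - (k * (μ ⬝ᵥ v)) • (S⁻¹ *ᵥ μ)) := by
        rcases eq_or_ne (v - (k * (μ ⬝ᵥ v)) • (S⁻¹ *ᵥ μ)) 0 with h | h
        · rw [h]; simp
        · have := hS.dotProduct_mulVec_pos h; rw [star_trivial] at this; exact this.le
      have e2 : (S⁻¹ *ᵥ μ) ⬝ᵥ S *ᵥ v = μ ⬝ᵥ v := by
        rw [hdsym, hSinv, dotProduct_comm]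
      have e3 : v ⬝ᵥ S *ᵥ (S⁻¹ *ᵥ μ) = μ ⬝ᵥ v := by
        rw [hSinv, dotProduct_comm]
      have e4 : (S⁻¹ *ᵥ μ) ⬝ᵥ S *ᵥ (S⁻¹ *ᵥ μ) = μ ⬝ᵥ S⁻¹ *ᵥ μ := by
        rw [hSinv, dotProduct_comm]
      have e1 : (v - (k * (μ ⬝ᵥ v)) • (S⁻¹ *ᵥ μ)) ⬝ᵥ
          S *ᵥ (v - (k * (μ ⬝ᵥ v)) • (S⁻¹ *ᵥ μ))
          = v ⬝ᵥ S *ᵥ v - 2 * (k * (μ ⬝ᵥ v)) * (μ ⬝ᵥ v)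
            + (k * (μ ⬝ᵥ v)) ^ 2 * (μ ⬝ᵥ S⁻¹ *ᵥ μ) := by
        rw [Matrix.mulVec_sub, Matrix.mulVec_smul, dotProduct_sub,
          sub_dotProduct, sub_dotProduct, dotProduct_smul,
          smul_dotProduct, smul_dotProduct, dotProduct_smul,
          e2, e3, e4]
        simp only [smul_eq_mul]; ring
      have hμu : μ ⬝ᵥ S⁻¹ *ᵥ μ = k⁻¹ := by rw [hk, inv_inv]
      rw [e1, hμu] at h0
      have hk' : k ≠ 0 := hkpos.ne'
      have hrw : (k * (μ ⬝ᵥ v)) ^ 2 * k⁻¹ = k * (μ ⬝ᵥ v) ^ 2 := by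
        field_simp
      rw [hrw] at h0
      nlinarith [h0]
    -- quadratic form computation
    have hQ : v ⬝ᵥ ((γR + c⁻¹) • S
      + k • (Matrix.diagonal (fun i => (μ i) ^ 2) * Matrix.diagonal γ)
      - (k / c) • Matrix.vecMulVec μ μ) *ᵥ v
        = (γR + c⁻¹) * (v ⬝ᵥ S *ᵥ v)
          + k * (∑ i, (μ i)^2 * γ i * (v i)^2)
          - (k / c) * (μ ⬝ᵥ v)^2 := by
      rw [Matrix.sub_mulVec, Matrix.add_mulVec, dotProduct_sub, dotProduct_add,
        Matrix.smul_mulVec, Matrix.smul_mulVec, Matrix.smul_mulVec,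
        dotProduct_smul, dotProduct_smul, dotProduct_smul]
      have e1 : v ⬝ᵥ (Matrix.diagonal (fun i => (μ i) ^ 2) * Matrix.diagonal γ) *ᵥ v
          = ∑ i, (μ i)^2 * γ i * (v i)^2 := by
        rw [Matrix.diagonal_mul_diagonal]
        simp only [dotProduct, Matrix.mulVec_diagonal]
        exact Finset.sum_congr rfl fun i _ => by ring
      have e2 : v ⬝ᵥ (Matrix.vecMulVec μ μ) *ᵥ v = (μ ⬝ᵥ v)^2 := by
        simp only [dotProduct, Matrix.mulVec, Matrix.vecMulVec_apply, dotProduct]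
        rw [sq]
        simp only [Finset.sum_mul, Finset.mul_sum]
        rw [Finset.sum_comm]
        refine Finset.sum_congr rfl fun i _ => Finset.sum_congr rfl fun j _ => by ring
      rw [e1, e2]
      simp [smul_eq_mul]
    have hstar : star v = v := by simp
    rw [hstar, hQ]
    have hQpos : 0 < v ⬝ᵥ S *ᵥ v := by
      have := hS.dotProduct_mulVec_pos hv; rw [star_trivial] at this; exact this
    have hsum : 0 < ∑ i, (μ i)^2 * γ i * (v i)^2 := by
      obtain ⟨i, hi⟩ : ∃ i, v i ≠ 0 := by
        by_contra h
        push_neg at h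
        exact hv (funext h)
      refine Finset.sum_pos' (fun j _ => mul_nonneg (mul_nonneg (sq_nonneg _) (hγ j).le) (sq_nonneg _)) ⟨i, Finset.mem_univ i, ?_⟩
      exact mul_pos (mul_pos (pow_pos (hμ i) 2) (hγ i)) (pow_two_pos_of_ne_zero hi)
    have key : 0 ≤ c⁻¹ * (v ⬝ᵥ S *ᵥ v) - (k / c) * (μ ⬝ᵥ v)^2 := by
      have : c⁻¹ * (v ⬝ᵥ S *ᵥ v) - (k / c) * (μ ⬝ᵥ v)^2
          = c⁻¹ * ((v ⬝ᵥ S *ᵥ v) - k * (μ ⬝ᵥ v)^2) := by rw [div_eq_mul_inv]; ring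
      rw [this]
      exact mul_nonneg (inv_pos.mpr hcpos).le (by linarith)
    nlinarith [mul_nonneg hγR hQpos.le, mul_pos hkpos hsum]
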